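/- Soundness of the orthologic proof system: if a sequent is provable in the orthologic proof system (without non-logical axioms), then every valuation into every ortholattice satisfies it. In particular, if the sequent (φ^L, ψ^R) is provable, then v(φ) ≤ v(ψ) holds for every ortholattice L and every valuation v : X → L. -/

import Mathlib

/-- Propositional formulas over a set `X` of variables. -/
inductive Formula (X : Type) : Type
  | var : X → Formula X
  | bot : Formula X
  | top : Formula X
  | and : Formula X → Formula X → Formula X
  | or : Formula X → Formula X → Formula X
  | not : Formula X → Formula X

/-- An ortholattice: a bounded lattice with a complement operation. -/
class Ortholattice (L : Type) extends Lattice L, BoundedOrder L where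
  compl : L → L
  compl_compl : ∀ x : L, compl (compl x) = x
  compl_sup : ∀ x y : L, compl (x ⊔ y) = compl x ⊓ compl y
  compl_inf : ∀ x y : L, compl (x ⊓ y) = compl x ⊔ compl y
  inf_compl : ∀ x : L, x ⊓ compl x = ⊥
  sup_compl : ∀ x : L, x ⊔ compl x = ⊤

/-- Homomorphic extension of a valuation `v : X → L` to formulas. -/
def Formula.eval {X L : Type} [Ortholattice L] (v : X → L) : Formula X → L
  | .var x => v x
  | .bot => ⊥
  | .top => ⊤
  | .and φ ψ => φ.eval v ⊓ ψ.eval v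
  | .or φ ψ => φ.eval v ⊔ ψ.eval v
  | .not φ => Ortholattice.compl (φ.eval v)

/-- Annotated formulas: a formula marked as left (`L`) or right (`R`). -/
inductive Ann (X : Type) : Type
  | L : Formula X → Ann X
  | R : Formula X → Ann X

/-- The underlying formula of an annotated formula. -/
def Ann.fml {X : Type} : Ann X → Formula X
  | .L φ => φ
  | .R φ => φ

/-- An orthologic sequent: an unordered pair of annotated formulas. -/
abbrev Sequent (X : Type) := Sym2 (Ann X)

/-- The orthologic proof system, with non-logical axioms `A`. -/
inductive OLProof {X : Type} (A : Set (Sequent X)) : Sequent X → Prop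
  | ax {t : Sequent X} : t ∈ A → OLProof A t
  | hyp (φ : Formula X) : OLProof A s(Ann.L φ, Ann.R φ)
  | cut (Γ Δ : Ann X) (φ : Formula X) :
      OLProof A s(Γ, Ann.R φ) → OLProof A s(Ann.L φ, Δ) → OLProof A s(Γ, Δ)
  | replace (Γ Δ : Ann X) : OLProof A s(Γ, Γ) → OLProof A s(Γ, Δ)
  | andL₁ (φ ψ : Formula X) (Δ : Ann X) :
      OLProof A s(Ann.L φ, Δ) → OLProof A s(Ann.L (φ.and ψ), Δ)
  | andL₂ (φ ψ : Formula X) (Δ : Ann X) :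
      OLProof A s(Ann.L ψ, Δ) → OLProof A s(Ann.L (φ.and ψ), Δ)
  | andR (Γ : Ann X) (φ ψ : Formula X) :
      OLProof A s(Γ, Ann.R φ) → OLProof A s(Γ, Ann.R ψ) → OLProof A s(Γ, Ann.R (φ.and ψ))
  | orL (φ ψ : Formula X) (Δ : Ann X) :
      OLProof A s(Ann.L φ, Δ) → OLProof A s(Ann.L ψ, Δ) → OLProof A s(Ann.L (φ.or ψ), Δ)
  | orR₁ (Γ : Ann X) (φ ψ : Formula X) :
      OLProof A s(Γ, Ann.R φ) → OLProof A s(Γ, Ann.R (φ.or ψ))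
  | orR₂ (Γ : Ann X) (φ ψ : Formula X) :
      OLProof A s(Γ, Ann.R ψ) → OLProof A s(Γ, Ann.R (φ.or ψ))
  | negL (Γ : Ann X) (φ : Formula X) :
      OLProof A s(Γ, Ann.R φ) → OLProof A s(Γ, Ann.L φ.not)
  | negR (φ : Formula X) (Δ : Ann X) :
      OLProof A s(Ann.L φ, Δ) → OLProof A s(Ann.R φ.not, Δ)
  | botL (Δ : Ann X) : OLProof A s(Ann.L Formula.bot, Δ)
  | topR (Γ : Ann X) : OLProof A s(Γ, Ann.R Formula.top)

/-- Satisfaction of an (ordered) pair of annotated formulas by a valuation. -/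
def AnnSat {X L : Type} [Ortholattice L] (v : X → L) : Ann X → Ann X → Prop
  | .L φ, .R ψ => φ.eval v ≤ ψ.eval v
  | .R φ, .L ψ => ψ.eval v ≤ φ.eval v
  | .L φ, .L ψ => φ.eval v ⊓ ψ.eval v = ⊥
  | .R φ, .R ψ => φ.eval v ⊔ ψ.eval v = ⊤

/-- A valuation satisfies a sequent. -/
def SeqSat {X L : Type} [Ortholattice L] (v : X → L) (t : Sequent X) : Prop :=
  ∀ a b : Ann X, t = s(a, b) → AnnSat v a b
/-- Boolean (classical) evaluation of a formula. -/
def Formula.evalB {X : Type} (v : X → Bool) : Formula X → Bool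
  | .var x => v x
  | .bot => false
  | .top => true
  | .and φ ψ => φ.evalB v && ψ.evalB v
  | .or φ ψ => φ.evalB v || ψ.evalB v
  | .not φ => !(φ.evalB v)

/-- Size of a formula (number of nodes). -/
def Formula.size {X : Type} : Formula X → Nat
  | .var _ => 1
  | .bot => 1
  | .top => 1
  | .and φ ψ => φ.size + ψ.size + 1
  | .or φ ψ => φ.size + ψ.size + 1
  | .not φ => φ.size + 1

/-- Negation normal form. -/
def Formula.nnf {X : Type} : Formula X → Formula X
  | .var x => .var x
  | .bot => .bot
  | .top => .top
  | .and φ ψ => .and φ.nnf ψ.nnf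
  | .or φ ψ => .or φ.nnf ψ.nnf
  | .not (.var x) => .not (.var x)
  | .not .bot => .top
  | .not .top => .bot
  | .not (.and φ ψ) => .or φ.not.nnf ψ.not.nnf
  | .not (.or φ ψ) => .and φ.not.nnf ψ.not.nnf
  | .not (.not φ) => φ.nnf
termination_by φ => φ.size
decreasing_by all_goals (simp [Formula.size]; try omega)

/-- A formula is in NNF if negation occurs only directly on variables. -/
def Formula.IsNNF {X : Type} : Formula X → Prop
  | .var _ => True
  | .bot => True
  | .top => True
  | .and φ ψ => φ.IsNNF ∧ ψ.IsNNF
  | .or φ ψ => φ.IsNNF ∧ ψ.IsNNF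
  | .not (.var _) => True
  | .not _ => False

/-- `getInverse φ = nnf (¬ φ)`. -/
def getInverse {X : Type} (φ : Formula X) : Formula X := φ.not.nnf

/-- Orthologic equivalence of formulas (without non-logical axioms). -/
def OLEquiv {X : Type} (φ ψ : Formula X) : Prop :=
  OLProof (∅ : Set (Sequent X)) s(Ann.L φ, Ann.R ψ) ∧
  OLProof (∅ : Set (Sequent X)) s(Ann.L ψ, Ann.R φ)

/-- `Subformula γ φ` means `γ` is a subformula of `φ`. -/
inductive Subformula {X : Type} : Formula X → Formula X → Prop
  | refl (φ : Formula X) : Subformula φ φ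
  | and_left {γ φ ψ : Formula X} : Subformula γ φ → Subformula γ (φ.and ψ)
  | and_right {γ φ ψ : Formula X} : Subformula γ ψ → Subformula γ (φ.and ψ)
  | or_left {γ φ ψ : Formula X} : Subformula γ φ → Subformula γ (φ.or ψ)
  | or_right {γ φ ψ : Formula X} : Subformula γ ψ → Subformula γ (φ.or ψ)
  | not_sub {γ φ : Formula X} : Subformula γ φ → Subformula γ φ.not
namespace OLSoundAux

variable {X L : Type} [Ortholattice L]

lemma ol_compl_antitone {x y : L} (h : x ≤ y) : Ortholattice.compl y ≤ Ortholattice.compl x := by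
  have h1 : x ⊔ y = y := sup_eq_right.mpr h
  have h2 : Ortholattice.compl y = Ortholattice.compl x ⊓ Ortholattice.compl y := by
    rw [← Ortholattice.compl_sup, h1]
  rw [h2]; exact inf_le_left

lemma ol_le_compl_iff {x y : L} :
    x ≤ Ortholattice.compl y ↔ y ≤ Ortholattice.compl x := by
  constructor <;> intro h <;>
    simpa only [Ortholattice.compl_compl] using ol_compl_antitone (L := L) h

lemma ol_compl_top : Ortholattice.compl (⊤ : L) = ⊥ := by
  have := Ortholattice.inf_compl (⊤ : L); simpa using this

lemma ol_compl_bot : Ortholattice.compl (⊥ : L) = ⊤ := by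
  have := Ortholattice.sup_compl (⊥ : L); simpa using this

/-- Interpretation of annotated formulas. -/
def interp (v : X → L) : Ann X → L
  | .L φ => φ.eval v
  | .R φ => Ortholattice.compl (φ.eval v)

/-- Strong satisfaction of an ordered pair. -/
def Strong (v : X → L) (a b : Ann X) : Prop :=
  interp v a ≤ Ortholattice.compl (interp v b)

lemma Strong.symm {v : X → L} {a b : Ann X} (h : Strong v a b) : Strong v b a :=
  ol_le_compl_iff.mp h

lemma strong_of_pair {v : X → L} {c d : Ann X} (h : Strong v c d) :
    ∀ a b : Ann X, s(c, d) = s(a, b) → Strong v a b := by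
  intro a b hab
  rw [Sym2.eq_iff] at hab
  rcases hab with ⟨rfl, rfl⟩ | ⟨rfl, rfl⟩
  · exact h
  · exact h.symm

lemma strong_sound {t : Sequent X}
    (h : OLProof (∅ : Set (Sequent X)) t) (v : X → L) :
    ∀ a b : Ann X, t = s(a, b) → Strong v a b := by
  induction h with
  | ax ht => exact absurd ht (Set.notMem_empty _)
  | hyp φ =>
      apply strong_of_pair
      simp only [Strong, interp, Ortholattice.compl_compl, le_refl]
  | cut Γ Δ φ h1 h2 ih1 ih2 =>
      apply strong_of_pair
      have H1 : Strong v Γ (Ann.R φ) := ih1 _ _ rfl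
      have H2 : Strong v (Ann.L φ) Δ := ih2 _ _ rfl
      simp only [Strong, interp, Ortholattice.compl_compl] at H1 H2 ⊢
      exact le_trans H1 H2
  | replace Γ Δ h1 ih1 =>
      apply strong_of_pair
      have H1 : Strong v Γ Γ := ih1 _ _ rfl
      simp only [Strong] at H1 ⊢
      have hbot : interp v Γ = ⊥ := by
        have h3 : interp v Γ ≤ interp v Γ ⊓ Ortholattice.compl (interp v Γ) :=
          le_inf le_rfl H1
        rw [Ortholattice.inf_compl] at h3
        exact le_bot_iff.mp h3
      rw [hbot]; exact bot_le
  | andL₁ φ ψ Δ h1 ih1 =>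
      apply strong_of_pair
      have H1 : Strong v (Ann.L φ) Δ := ih1 _ _ rfl
      simp only [Strong, interp, Formula.eval] at H1 ⊢
      exact le_trans inf_le_left H1
  | andL₂ φ ψ Δ h1 ih1 =>
      apply strong_of_pair
      have H1 : Strong v (Ann.L ψ) Δ := ih1 _ _ rfl
      simp only [Strong, interp, Formula.eval] at H1 ⊢
      exact le_trans inf_le_right H1
  | andR Γ φ ψ h1 h2 ih1 ih2 =>
      apply strong_of_pair
      have H1 : Strong v Γ (Ann.R φ) := ih1 _ _ rfl
      have H2 : Strong v Γ (Ann.R ψ) := ih2 _ _ rfl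
      simp only [Strong, interp, Formula.eval, Ortholattice.compl_compl] at H1 H2 ⊢
      exact le_inf H1 H2
  | orL φ ψ Δ h1 h2 ih1 ih2 =>
      apply strong_of_pair
      have H1 : Strong v (Ann.L φ) Δ := ih1 _ _ rfl
      have H2 : Strong v (Ann.L ψ) Δ := ih2 _ _ rfl
      simp only [Strong, interp, Formula.eval] at H1 H2 ⊢
      exact sup_le H1 H2
  | orR₁ Γ φ ψ h1 ih1 =>
      apply strong_of_pair
      have H1 : Strong v Γ (Ann.R φ) := ih1 _ _ rfl
      simp only [Strong, interp, Formula.eval, Ortholattice.compl_compl] at H1 ⊢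
      exact le_trans H1 le_sup_left
  | orR₂ Γ φ ψ h1 ih1 =>
      apply strong_of_pair
      have H1 : Strong v Γ (Ann.R ψ) := ih1 _ _ rfl
      simp only [Strong, interp, Formula.eval, Ortholattice.compl_compl] at H1 ⊢
      exact le_trans H1 le_sup_right
  | negL Γ φ h1 ih1 =>
      apply strong_of_pair
      have H1 : Strong v Γ (Ann.R φ) := ih1 _ _ rfl
      simp only [Strong, interp, Formula.eval, Ortholattice.compl_compl] at H1 ⊢
      exact H1
  | negR φ Δ h1 ih1 =>
      apply strong_of_pair
      have H1 : Strong v (Ann.L φ) Δ := ih1 _ _ rfl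
      simp only [Strong, interp, Formula.eval, Ortholattice.compl_compl] at H1 ⊢
      exact H1
  | botL Δ =>
      apply strong_of_pair
      simp only [Strong, interp, Formula.eval]
      exact bot_le
  | topR Γ =>
      apply strong_of_pair
      simp only [Strong, interp, Formula.eval, ol_compl_top, ol_compl_bot,
        Ortholattice.compl_compl]
      exact le_top

lemma strong_annSat {v : X → L} {a b : Ann X} (h : Strong v a b) :
    AnnSat v a b := by
  cases a with
  | L φ =>
      cases b with
      | L ψ =>
          simp only [Strong, interp] at h
          simp only [AnnSat]
          have h1 : φ.eval v ⊓ ψ.eval v ≤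
              Ortholattice.compl (ψ.eval v) ⊓ ψ.eval v :=
            inf_le_inf h le_rfl
          have h2 : Ortholattice.compl (ψ.eval v) ⊓ ψ.eval v = ⊥ := by
            rw [inf_comm]; exact Ortholattice.inf_compl _
          rw [h2] at h1
          exact le_bot_iff.mp h1
      | R ψ =>
          simp only [Strong, interp, Ortholattice.compl_compl] at h
          exact h
  | R φ =>
      cases b with
      | L ψ =>
          simp only [Strong, interp] at h
          simpa only [AnnSat, Ortholattice.compl_compl] using
            ol_compl_antitone (L := L) h
      | R ψ =>
          simp only [Strong, interp, Ortholattice.compl_compl] at h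
          simp only [AnnSat]
          have h1 : Ortholattice.compl (φ.eval v) ⊔ φ.eval v ≤
              ψ.eval v ⊔ φ.eval v := sup_le_sup h le_rfl
          have h2 : Ortholattice.compl (φ.eval v) ⊔ φ.eval v = ⊤ := by
            rw [sup_comm]; exact Ortholattice.sup_compl _
          rw [h2] at h1
          rw [sup_comm]
          exact top_le_iff.mp h1

end OLSoundAux

/-- Soundness of the orthologic proof system (without non-logical
axioms): every provable sequent is satisfied by every valuation into every
ortholattice; in particular if `(φ^L, ψ^R)` is provable then `v(φ) ≤ v(ψ)`. -/
theorem ol_soundness {X : Type} [Countable X] [Infinite X] :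
    (∀ t : Sequent X, OLProof (∅ : Set (Sequent X)) t →
      ∀ (L : Type) [Ortholattice L] (v : X → L), SeqSat v t) ∧
    (∀ φ ψ : Formula X, OLProof (∅ : Set (Sequent X)) s(Ann.L φ, Ann.R ψ) →
      ∀ (L : Type) [Ortholattice L] (v : X → L), φ.eval v ≤ ψ.eval v) := by
  constructor
  · intro t ht L _ v a b hab
    exact OLSoundAux.strong_annSat (OLSoundAux.strong_sound ht v a b hab)
  · intro φ ψ h L _ v
    have := OLSoundAux.strong_annSat
      (OLSoundAux.strong_sound h v (Ann.L φ) (Ann.R ψ) rfl)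
    exact this
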